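/- Let μ ≠ 0 and ε = ±1 be real constants, and on ℝ³ with coordinates (x₁,x₂,x₃) define the vector fields u₁ = e^{μx₃}∂₁ + (1/(2μ))((μ³x₂² + ε)e^{μx₃} − εe^{−μx₃})∂₂ − μx₂e^{μx₃}∂₃, u₂ = e^{−μx₃}∂₂, u₃ = ∂₃. Then their Lie brackets satisfy [u₁,u₂] = μu₃, [u₂,u₃] = μu₂, and [u₃,u₁] = μu₁ + εu₂. -/

import Mathlib

/-- A point of `ℝ³`. -/
abbrev Pt := Fin 3 → ℝ

/-- The Lie bracket of two vector fields on `ℝ³`, viewed as smooth maps `ℝ³ → ℝ³`: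
`[X,Y] = (DY)X − (DX)Y`. -/
noncomputable def vecBracket (X Y : Pt → Pt) : Pt → Pt :=
  fun p => fderiv ℝ Y p (X p) - fderiv ℝ X p (Y p)

/-- `u₁ = e^{μx₃}∂₁ + (1/(2μ))((μ³x₂² + ε)e^{μx₃} − εe^{−μx₃})∂₂ − μx₂e^{μx₃}∂₃`. -/
noncomputable def u₁ (μ ε : ℝ) : Pt → Pt := fun p =>
  ![Real.exp (μ * p 2),
    (1/(2*μ)) * ((μ^3 * (p 1)^2 + ε) * Real.exp (μ * p 2) - ε * Real.exp (-(μ * p 2))),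
    -(μ * p 1 * Real.exp (μ * p 2))]

/-- `u₂ = e^{−μx₃}∂₂`. -/
noncomputable def u₂ (μ : ℝ) : Pt → Pt := fun p =>
  ![0, Real.exp (-(μ * p 2)), 0]

/-- `u₃ = ∂₃`. -/
noncomputable def u₃ : Pt → Pt := fun _ => ![0, 0, 1]

open ContinuousLinearMap in
lemma fderiv_u₂_apply (μ : ℝ) (p v : Pt) :
    fderiv ℝ (u₂ μ) p v = ![0, Real.exp (-(μ * p 2)) * (-μ * v 2), 0] := by
  have h1 : HasFDerivAt (fun x : Pt => Real.exp (-(μ * x 2)))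
      (-(Real.exp (-(μ * p 2)) • μ • (proj 2 : Pt →L[ℝ] ℝ))) p := by
    have := ((hasFDerivAt_apply 2 p).const_mul (-μ)).exp
    simpa [neg_mul, smul_neg, neg_smul] using this
  have hF : HasFDerivAt (u₂ μ)
      (ContinuousLinearMap.pi ![0, -(Real.exp (-(μ * p 2)) • μ • (proj 2 : Pt →L[ℝ] ℝ)), 0]) p := by
    have heq : u₂ μ = fun x i => (![fun _ => 0, fun x : Pt => Real.exp (-(μ * x 2)), fun _ => 0] : Fin 3 → Pt → ℝ) i x := by
      funext x i; fin_cases i <;> simp [u₂]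
    rw [heq]
    refine hasFDerivAt_pi.2 ?_
    intro i; fin_cases i <;> simp [h1, hasFDerivAt_const]
  rw [hF.fderiv]
  funext i; fin_cases i <;> (try simp) <;> (try ring)

open ContinuousLinearMap in
lemma fderiv_u₁_apply (μ ε : ℝ) (p v : Pt) :
    fderiv ℝ (u₁ μ ε) p v =
      ![μ * v 2 * Real.exp (μ * p 2),
        (1/(2*μ)) * (μ^3 * (2 * p 1 * v 1) * Real.exp (μ * p 2)
          + (μ^3 * (p 1)^2 + ε) * (μ * v 2) * Real.exp (μ * p 2)
          + ε * (μ * v 2) * Real.exp (-(μ * p 2))),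
        -(μ * v 1 * Real.exp (μ * p 2) + μ * p 1 * (μ * v 2) * Real.exp (μ * p 2))] := by
  set e := Real.exp (μ * p 2)
  set e' := Real.exp (-(μ * p 2))
  have hx1 := hasFDerivAt_apply (𝕜 := ℝ) 1 p
  have he : HasFDerivAt (fun x : Pt => Real.exp (μ * x 2))
      (e • μ • (proj 2 : Pt →L[ℝ] ℝ)) p := ((hasFDerivAt_apply 2 p).const_mul μ).exp
  have he' : HasFDerivAt (fun x : Pt => Real.exp (-(μ * x 2)))
      (-(e' • μ • (proj 2 : Pt →L[ℝ] ℝ))) p := by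
    have := ((hasFDerivAt_apply 2 p).const_mul (-μ)).exp
    simpa [neg_mul, smul_neg, neg_smul] using this
  have hsq : HasFDerivAt (fun x : Pt => (x 1)^2)
      (p 1 • (proj 1 : Pt →L[ℝ] ℝ) + p 1 • (proj 1 : Pt →L[ℝ] ℝ)) p := by
    simp only [sq]; exact hx1.mul hx1
  have hg : HasFDerivAt (fun x : Pt => μ^3 * (x 1)^2 + ε)
      (μ^3 • (p 1 • (proj 1 : Pt →L[ℝ] ℝ) + p 1 • (proj 1 : Pt →L[ℝ] ℝ))) p :=
    (hsq.const_mul (μ^3)).add_const ε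
  have h1 : HasFDerivAt
      (fun x : Pt => (1/(2*μ)) * ((μ^3 * (x 1)^2 + ε) * Real.exp (μ * x 2) - ε * Real.exp (-(μ * x 2))))
      ((1/(2*μ)) • (((μ^3 * (p 1)^2 + ε) • (e • μ • (proj 2 : Pt →L[ℝ] ℝ))
          + e • (μ^3 • (p 1 • (proj 1 : Pt →L[ℝ] ℝ) + p 1 • (proj 1 : Pt →L[ℝ] ℝ))))
        - ε • (-(e' • μ • (proj 2 : Pt →L[ℝ] ℝ))))) p :=
    ((hg.mul he).sub (he'.const_mul ε)).const_mul (1/(2*μ))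
  have h2 : HasFDerivAt (fun x : Pt => -(μ * x 1 * Real.exp (μ * x 2)))
      (-((μ * p 1) • (e • μ • (proj 2 : Pt →L[ℝ] ℝ)) + e • (μ • (proj 1 : Pt →L[ℝ] ℝ)))) p :=
    ((hx1.const_mul μ).mul he).neg
  have hF : HasFDerivAt (u₁ μ ε)
      (ContinuousLinearMap.pi
        ![e • μ • (proj 2 : Pt →L[ℝ] ℝ),
          (1/(2*μ)) • (((μ^3 * (p 1)^2 + ε) • (e • μ • (proj 2 : Pt →L[ℝ] ℝ))
              + e • (μ^3 • (p 1 • (proj 1 : Pt →L[ℝ] ℝ) + p 1 • (proj 1 : Pt →L[ℝ] ℝ))))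
            - ε • (-(e' • μ • (proj 2 : Pt →L[ℝ] ℝ)))),
          -((μ * p 1) • (e • μ • (proj 2 : Pt →L[ℝ] ℝ)) + e • (μ • (proj 1 : Pt →L[ℝ] ℝ)))]) p := by
    have heq : u₁ μ ε = fun x i =>
        (![fun x : Pt => Real.exp (μ * x 2),
           fun x : Pt => (1/(2*μ)) * ((μ^3 * (x 1)^2 + ε) * Real.exp (μ * x 2) - ε * Real.exp (-(μ * x 2))),
           fun x : Pt => -(μ * x 1 * Real.exp (μ * x 2))] : Fin 3 → Pt → ℝ) i x := by
      funext x i; fin_cases i <;> simp [u₁]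
    rw [heq]
    refine hasFDerivAt_pi.2 ?_
    intro i; fin_cases i
    · exact he
    · exact h1
    · exact h2
  rw [hF.fderiv]
  funext i; fin_cases i <;> (try simp) <;> (try ring)

theorem bracket_relations (μ ε : ℝ) (hμ : μ ≠ 0) (hε : ε = 1 ∨ ε = -1) :
    (∀ p : Pt, vecBracket (u₁ μ ε) (u₂ μ) p = μ • u₃ p) ∧
    (∀ p : Pt, vecBracket (u₂ μ) u₃ p = μ • u₂ μ p) ∧
    (∀ p : Pt, vecBracket u₃ (u₁ μ ε) p = μ • u₁ μ ε p + ε • u₂ μ p) := by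
  have hu3 : ∀ p : Pt, fderiv ℝ u₃ p = 0 := fun p => fderiv_const_apply _
  have hee : ∀ p : Pt, Real.exp (μ * p 2) * Real.exp (-(μ * p 2)) = 1 := by
    intro p; rw [← Real.exp_add]; simp
  refine ⟨?_, ?_, ?_⟩
  · intro p
    have h1 := fderiv_u₂_apply μ p (u₁ μ ε p)
    have h2 := fderiv_u₁_apply μ ε p (u₂ μ p)
    show fderiv ℝ (u₂ μ) p (u₁ μ ε p) - fderiv ℝ (u₁ μ ε) p (u₂ μ p) = μ • u₃ p
    rw [h1, h2]
    funext i; fin_cases i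
    · simp [u₁, u₂, u₃]
    · simp [u₁, u₂, u₃]; field_simp; ring
    · simp [u₁, u₂, u₃]
      linear_combination μ * hee p
  · intro p
    have h1 := fderiv_u₂_apply μ p (u₃ p)
    show fderiv ℝ u₃ p (u₂ μ p) - fderiv ℝ (u₂ μ) p (u₃ p) = μ • u₂ μ p
    rw [h1, hu3]
    funext i; fin_cases i <;> (try simp [u₂, u₃]) <;> (try ring)
  · intro p
    have h2 := fderiv_u₁_apply μ ε p (u₃ p)
    show fderiv ℝ (u₁ μ ε) p (u₃ p) - fderiv ℝ u₃ p (u₁ μ ε p) = μ • u₁ μ ε p + ε • u₂ μ p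
    rw [h2, hu3]
    funext i; fin_cases i
    · simp [u₁, u₂, u₃]
    · simp [u₁, u₂, u₃]; field_simp; ring
    · simp [u₁, u₂, u₃]; ring
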